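/- Let N ≥ 1, let k ≠ 0 be real, let Ω ∈ ℝ^N, and let Γ: ℝ → ℝ. Let C(k) denote the N×N real tridiagonal matrix with all diagonal entries −(1+k), all superdiagonal entries 1, and all subdiagonal entries k. If x: ℝ → ℝ^N is a differentiable solution of ẋ = Ω + C(k)Γ(x), then y: ℝ → ℝ^N defined by yᵢ(t) = x_{N+1−i}(t/k) is a differentiable solution of ẏ = Ω′ + C(1/k)Γ(y), where Ω′ᵢ = Ω_{N+1−i}/k for i = 1,…,N. -/

import Mathlib

open Matrix

/-- Reversal symmetry of the phase-difference system: if `x`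
solves `ẋ = Ω + C(k)Γ(x)` with `k ≠ 0`, then `yᵢ(t) = x_{N+1−i}(t/k)` solves
`ẏ = Ω′ + C(1/k)Γ(y)` with `Ω′ᵢ = Ω_{N+1−i}/k`. -/
theorem reversal_symmetry (N : ℕ) (hN : 1 ≤ N) (k : ℝ) (hk : k ≠ 0)
    (Ω : Fin N → ℝ) (Γ : ℝ → ℝ)
    (Cm : ℝ → Matrix (Fin N) (Fin N) ℝ)
    (hCm : ∀ (c : ℝ) (i j : Fin N), Cm c i j =
      if (i : ℕ) = (j : ℕ) then -(1 + c)
      else if (j : ℕ) = (i : ℕ) + 1 then 1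
      else if (i : ℕ) = (j : ℕ) + 1 then c else 0)
    (x : ℝ → Fin N → ℝ)
    (hx : ∀ (t : ℝ) (i : Fin N),
      HasDerivAt (fun s => x s i) (Ω i + (Cm k *ᵥ fun j => Γ (x t j)) i) t)
    (y : ℝ → Fin N → ℝ) (hy : ∀ (t : ℝ) (i : Fin N), y t i = x (t / k) i.rev)
    (Ω' : Fin N → ℝ) (hΩ' : ∀ i : Fin N, Ω' i = Ω i.rev / k) :
    ∀ (t : ℝ) (i : Fin N),
      HasDerivAt (fun s => y s i) (Ω' i + (Cm (1 / k) *ᵥ fun j => Γ (y t j)) i) t := by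
  intro t i
  have hdiv : HasDerivAt (fun s : ℝ => s / k) (1 / k) t := by
    simpa using (hasDerivAt_id t).div_const k
  have h1 : HasDerivAt (fun s => x (s / k) i.rev)
      ((Ω i.rev + (Cm k *ᵥ fun j => Γ (x (t / k) j)) i.rev) * (1 / k)) t :=
    by have := (hx (t / k) i.rev).comp t hdiv; exact this
  have hfun : (fun s => y s i) = fun s => x (s / k) i.rev := by
    funext s; exact hy s i
  have hentry : ∀ j : Fin N, Cm (1 / k) i j.rev = (1 / k) * Cm k i.rev j := by
    intro j
    rw [hCm, hCm]
    have hi := i.isLt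
    have hj := j.isLt
    simp only [Fin.val_rev]
    by_cases h1 : (i : ℕ) + (j : ℕ) + 1 = N
    · rw [if_pos (by omega), if_pos (by omega)]
      field_simp; ring
    · by_cases h2 : (i : ℕ) + (j : ℕ) + 2 = N
      · rw [if_neg (by omega), if_pos (by omega), if_neg (by omega),
          if_neg (by omega), if_pos (by omega)]
        field_simp
      · by_cases h3 : (i : ℕ) + (j : ℕ) = N
        · rw [if_neg (by omega), if_neg (by omega), if_pos (by omega),
            if_neg (by omega), if_pos (by omega)]
          ring
        · rw [if_neg (by omega), if_neg (by omega), if_neg (by omega),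
            if_neg (by omega), if_neg (by omega), if_neg (by omega)]
          ring
  have hentry' : ∀ j : Fin N, Cm (1 / k) i j = (1 / k) * Cm k i.rev j.rev := by
    intro j
    have := hentry j.rev
    rwa [Fin.rev_rev] at this
  have hsum : (Cm (1 / k) *ᵥ fun j => Γ (y t j)) i
      = (1 / k) * (Cm k *ᵥ fun j => Γ (x (t / k) j)) i.rev := by
    simp only [mulVec, dotProduct, Finset.mul_sum]
    refine Fintype.sum_equiv (Fin.revPerm) _ _ ?_
    intro j
    simp only [Fin.revPerm_apply]
    rw [hy t j, hentry' j]
    ring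
  have heq : (Ω i.rev + (Cm k *ᵥ fun j => Γ (x (t / k) j)) i.rev) * (1 / k)
      = Ω' i + (Cm (1 / k) *ᵥ fun j => Γ (y t j)) i := by
    rw [hΩ' i, hsum]; ring
  rw [← heq, hfun]
  exact h1
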